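/- arXiv:2406.00394 — 3 statements merged into one kernel-verified Lean document; each statement's English description precedes it below -/
import Mathlib

section
/- Let W be a strictly upper triangular n×n matrix with nonnegative entries, and let F = (I − W)^{−1}. Then for i ≠ j, the entry F i j is strictly positive if and only if there exists a directed path from i to j in the graph whose edges are the pairs (k,l) with W k l > 0; moreover F i i = 1 for all i. -/
section aux

variable {n : ℕ} (W : Matrix (Fin n) (Fin n) ℝ)

lemma pow_entry_nonneg (hW0 : ∀ i j : Fin n, 0 ≤ W i j) :
    ∀ (k : ℕ) (i j : Fin n), 0 ≤ (W ^ k) i j := by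
  intro k
  induction k with
  | zero =>
    intro i j
    simp [Matrix.one_apply]
    split <;> norm_num
  | succ k ih =>
    intro i j
    rw [pow_succ', Matrix.mul_apply]
    exact Finset.sum_nonneg fun l _ => mul_nonneg (hW0 i l) (ih l j)

lemma pow_entry_zero (hW : ∀ i j : Fin n, j ≤ i → W i j = 0) :
    ∀ (k : ℕ) (i j : Fin n), ¬ ((i : ℕ) + k ≤ (j : ℕ)) → (W ^ k) i j = 0 := by
  intro k
  induction k with
  | zero =>
    intro i j h
    have : i ≠ j := by
      intro hij; apply h; simp [hij]
    simp [Matrix.one_apply, this]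
  | succ k ih =>
    intro i j h
    rw [pow_succ', Matrix.mul_apply]
    apply Finset.sum_eq_zero
    intro l _
    by_cases hl : l ≤ i
    · rw [hW i l hl, zero_mul]
    · push_neg at hl
      have : ¬ ((l : ℕ) + k ≤ (j : ℕ)) := by
        intro hle; apply h; omega
      rw [ih l j this, mul_zero]

lemma pow_path (hW0 : ∀ i j : Fin n, 0 ≤ W i j) :
    ∀ (k : ℕ) (i j : Fin n), 0 < (W ^ (k + 1)) i j →
      Relation.TransGen (fun k l => 0 < W k l) i j := by
  intro k
  induction k with
  | zero =>
    intro i j h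
    rw [pow_one] at h
    exact Relation.TransGen.single h
  | succ k ih =>
    intro i j h
    rw [pow_succ', Matrix.mul_apply] at h
    have : ∃ l : Fin n, 0 < W i l * (W ^ (k + 1)) l j := by
      by_contra hc
      push_neg at hc
      have : ∑ l, W i l * (W ^ (k + 1)) l j = 0 :=
        Finset.sum_eq_zero fun l _ =>
          le_antisymm (hc l) (mul_nonneg (hW0 i l) (pow_entry_nonneg W hW0 _ l j))
      rw [this] at h; exact lt_irrefl 0 h
    obtain ⟨l, hl⟩ := this
    have h1 : 0 < W i l := by
      by_contra hc
      push_neg at hc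
      have : W i l = 0 := le_antisymm hc (hW0 i l)
      rw [this, zero_mul] at hl; exact lt_irrefl 0 hl
    have h2 : 0 < (W ^ (k + 1)) l j := by
      by_contra hc
      push_neg at hc
      have : (W ^ (k + 1)) l j = 0 := le_antisymm hc (pow_entry_nonneg W hW0 _ l j)
      rw [this, mul_zero] at hl; exact lt_irrefl 0 hl
    exact Relation.TransGen.head h1 (ih l j h2)

lemma path_pow (hW0 : ∀ i j : Fin n, 0 ≤ W i j) {i j : Fin n}
    (h : Relation.TransGen (fun k l => 0 < W k l) i j) :
    ∃ k : ℕ, 0 < (W ^ (k + 1)) i j := by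
  induction h with
  | single h => exact ⟨0, by rwa [pow_one]⟩
  | @tail b c hb hlast ih =>
    obtain ⟨k, hk⟩ := ih
    refine ⟨k + 1, ?_⟩
    rw [pow_succ, Matrix.mul_apply]
    have : 0 < (W ^ (k + 1)) i b * W b c := mul_pos hk hlast
    calc (0 : ℝ) < (W ^ (k + 1)) i b * W b c := this
      _ ≤ ∑ l, (W ^ (k + 1)) i l * W l c :=
        Finset.single_le_sum (f := fun l => (W ^ (k + 1)) i l * W l c)
          (fun l _ => mul_nonneg (pow_entry_nonneg W hW0 _ i l) (hW0 l c))
          (Finset.mem_univ b)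

end aux

/-- For a nonnegative strictly upper triangular `W` with reduced form `F = (I - W)⁻¹`,
off-diagonal entries of `F` are positive exactly when there is a directed path in the
graph of positive entries of `W`; diagonal entries equal `1`. -/
theorem reducedForm_pos_iff_path {n : ℕ} (W : Matrix (Fin n) (Fin n) ℝ)
    (hW0 : ∀ i j : Fin n, 0 ≤ W i j) (hW : ∀ i j : Fin n, j ≤ i → W i j = 0) :
    (∀ i j : Fin n, i ≠ j →
      (0 < (1 - W)⁻¹ i j ↔ Relation.TransGen (fun k l => 0 < W k l) i j)) ∧
    (∀ i : Fin n, (1 - W)⁻¹ i i = 1) := by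
  have hWn : W ^ n = 0 := by
    ext i j
    have : ¬ ((i : ℕ) + n ≤ (j : ℕ)) := by omega
    simp [pow_entry_zero W hW n i j this]
  have hinv : (1 - W)⁻¹ = ∑ k ∈ Finset.range n, W ^ k := by
    apply Matrix.inv_eq_right_inv
    have h2 : (1 - W) * ∑ k ∈ Finset.range n, W ^ k = 1 - W ^ n := by
      have h3 := mul_geom_sum W n
      have : (1 - W) * ∑ k ∈ Finset.range n, W ^ k
          = -((W - 1) * ∑ k ∈ Finset.range n, W ^ k) := by
        rw [← neg_sub W 1, neg_mul]
      rw [this, h3, neg_sub]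
    rw [h2, hWn, sub_zero]
  constructor
  · intro i j hij
    constructor
    · intro hpos
      rw [hinv, Matrix.sum_apply] at hpos
      have : ∃ k ∈ Finset.range n, 0 < (W ^ k) i j := by
        by_contra hc
        push_neg at hc
        have : ∑ k ∈ Finset.range n, (W ^ k) i j = 0 :=
          Finset.sum_eq_zero fun k hk =>
            le_antisymm (hc k hk) (pow_entry_nonneg W hW0 k i j)
        rw [this] at hpos; exact lt_irrefl 0 hpos
      obtain ⟨k, _, hk⟩ := this
      match k with
      | 0 => simp [Matrix.one_apply, hij] at hk
      | (m + 1) => exact pow_path W hW0 m i j hk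
    · intro hpath
      obtain ⟨k, hk⟩ := path_pow W hW0 hpath
      have hkn : k + 1 < n := by
        by_contra hc
        push_neg at hc
        have : ¬ ((i : ℕ) + (k + 1) ≤ (j : ℕ)) := by omega
        rw [pow_entry_zero W hW (k + 1) i j this] at hk
        exact lt_irrefl 0 hk
      rw [hinv, Matrix.sum_apply]
      calc (0 : ℝ) < (W ^ (k + 1)) i j := hk
        _ ≤ ∑ m ∈ Finset.range n, (W ^ m) i j :=
          Finset.single_le_sum (f := fun m => (W ^ m) i j)
            (fun m _ => pow_entry_nonneg W hW0 m i j)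
            (Finset.mem_range.mpr hkn)
  · intro i
    rw [hinv, Matrix.sum_apply]
    have hn : 0 < n := i.pos
    rw [Finset.sum_eq_single 0]
    · simp [Matrix.one_apply]
    · intro k _ hk
      apply pow_entry_zero W hW k i i
      omega
    · intro h; exact absurd (Finset.mem_range.mpr hn) h
end

section
/- Let A ∈ ℝ^{p×p} and C ∈ ℝ^{q×q} be strictly upper triangular, W₁₂ ∈ ℝ^{p×q}, t₁ ∈ ℝ^p, t₂ ∈ ℝ^q, m ∈ ℝ. Define s₁ = (I−A)^{−1} t₁, s₂ = (I−C)^{−1} t₂, the concrete matrix W = [[A, W₁₂],[0, C]], the block-diagonal map T = [[t₁, 0],[0, t₂]] ∈ ℝ^{(p+q)×2}, the exogenous map S = [[s₁, 0],[0, s₂]], and the abstract reduced form G = [[1, m],[0, 1]]. Then (I − W)^{−1} T = S G if and only if W₁₂ s₂ = m t₁. -/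
open Matrix

private lemma col_mul {n k : ℕ} (P : Matrix (Fin n) (Fin k) ℝ) (v : Fin k → ℝ) :
    P * (Matrix.of fun i (_ : Fin 1) => v i) = Matrix.of fun i (_ : Fin 1) => P.mulVec v i := by
  ext i j
  simp [Matrix.mul_apply, Matrix.mulVec, dotProduct]

private lemma det_one_sub {n : ℕ} (A : Matrix (Fin n) (Fin n) ℝ)
    (hA : ∀ i j : Fin n, j ≤ i → A i j = 0) : (1 - A).det = 1 := by
  have ht : (1 - A).BlockTriangular id := by
    intro i j hij
    have hij' : j < i := hij
    simp [Matrix.sub_apply, Matrix.one_apply, hA i j hij'.le, hij'.ne']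
  rw [Matrix.det_of_upperTriangular ht]
  have : ∀ i : Fin n, (1 - A) i i = 1 := by
    intro i; simp [Matrix.sub_apply, hA i i le_rfl]
  simp [this]

/-- Two-variable Block Abstraction theorem: the abstract model `Y₁ → Y₂` with
coefficient `m` is a `T`-abstraction of the two-block concrete model exactly when
`W₁₂ s₂ = m t₁`. -/
theorem block_abstraction_two_vars {p q : ℕ}
    (A : Matrix (Fin p) (Fin p) ℝ) (C : Matrix (Fin q) (Fin q) ℝ)
    (hA : ∀ i j : Fin p, j ≤ i → A i j = 0) (hC : ∀ i j : Fin q, j ≤ i → C i j = 0)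
    (W₁₂ : Matrix (Fin p) (Fin q) ℝ) (t₁ : Fin p → ℝ) (t₂ : Fin q → ℝ) (m : ℝ)
    (s₁ : Fin p → ℝ) (hs₁ : s₁ = (1 - A)⁻¹.mulVec t₁)
    (s₂ : Fin q → ℝ) (hs₂ : s₂ = (1 - C)⁻¹.mulVec t₂) :
    ((1 - Matrix.fromBlocks A W₁₂ 0 C)⁻¹ *
        Matrix.fromBlocks (Matrix.of fun i (_ : Fin 1) => t₁ i) 0 0
          (Matrix.of fun i (_ : Fin 1) => t₂ i) =
      Matrix.fromBlocks (Matrix.of fun i (_ : Fin 1) => s₁ i) 0 0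
          (Matrix.of fun i (_ : Fin 1) => s₂ i) *
        Matrix.fromBlocks 1 (Matrix.of fun (_ : Fin 1) (_ : Fin 1) => m) 0 1)
      ↔ W₁₂.mulVec s₂ = m • t₁ := by
  have hdA : (1 - A).det = 1 := det_one_sub A hA
  have hdC : (1 - C).det = 1 := det_one_sub C hC
  have huA : IsUnit (1 - A).det := by rw [hdA]; exact isUnit_one
  have huC : IsUnit (1 - C).det := by rw [hdC]; exact isUnit_one
  have hW : (1 : Matrix (Fin p ⊕ Fin q) (Fin p ⊕ Fin q) ℝ) - Matrix.fromBlocks A W₁₂ 0 C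
      = Matrix.fromBlocks (1 - A) (-W₁₂) 0 (1 - C) := by
    rw [← Matrix.fromBlocks_one]
    ext (i | i) (j | j) <;> simp [Matrix.fromBlocks]
  have huW : IsUnit ((1 : Matrix (Fin p ⊕ Fin q) (Fin p ⊕ Fin q) ℝ)
      - Matrix.fromBlocks A W₁₂ 0 C).det := by
    rw [hW, Matrix.det_fromBlocks_zero₂₁, hdA, hdC]; simp
  have : Invertible ((1 : Matrix (Fin p ⊕ Fin q) (Fin p ⊕ Fin q) ℝ)
      - Matrix.fromBlocks A W₁₂ 0 C) := (1 - Matrix.fromBlocks A W₁₂ 0 C).invertibleOfIsUnitDet huW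
  have key : ∀ (B C' : Matrix (Fin p ⊕ Fin q) (Fin 1 ⊕ Fin 1) ℝ),
      (1 - Matrix.fromBlocks A W₁₂ 0 C)⁻¹ * B = C' ↔ B = (1 - Matrix.fromBlocks A W₁₂ 0 C) * C' := by
    intro B C'
    constructor
    · intro h
      rw [← h, ← Matrix.mul_assoc, Matrix.mul_nonsing_inv _ huW, Matrix.one_mul]
    · intro h
      rw [h, ← Matrix.mul_assoc, Matrix.nonsing_inv_mul _ huW, Matrix.one_mul]
  rw [key]
  have hAs₁ : (1 - A).mulVec s₁ = t₁ := by
    rw [hs₁, Matrix.mulVec_mulVec, Matrix.mul_nonsing_inv _ huA, Matrix.one_mulVec]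
  have hCs₂ : (1 - C).mulVec s₂ = t₂ := by
    rw [hs₂, Matrix.mulVec_mulVec, Matrix.mul_nonsing_inv _ huC, Matrix.one_mulVec]
  rw [hW]
  erw [Matrix.fromBlocks_multiply]
  rw [Matrix.fromBlocks_multiply]
  simp only [Matrix.mul_zero, Matrix.zero_mul, Matrix.mul_one, Matrix.one_mul,
    add_zero, zero_add]
  rw [Matrix.fromBlocks_inj]
  have hcolm : (Matrix.of fun i (_ : Fin 1) => s₁ i) * (Matrix.of fun (_ : Fin 1) (_ : Fin 1) => m)
      = Matrix.of fun i (_ : Fin 1) => m * s₁ i := by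
    ext i j; simp [Matrix.mul_apply, mul_comm]
  constructor
  · rintro ⟨-, h2, -, -⟩
    rw [hcolm, col_mul, col_mul] at h2
    funext i
    have := congrFun (congrFun h2 i) 0
    simp only [Matrix.add_apply, Matrix.of_apply, Matrix.zero_apply] at this
    have hm : (1 - A).mulVec (fun i => m * s₁ i) i = m * t₁ i := by
      have : (fun i => m * s₁ i) = m • s₁ := by funext i; simp
      rw [this, Matrix.mulVec_smul, hAs₁]; simp
    rw [Matrix.neg_mulVec] at this
    simp only [Pi.neg_apply] at this
    rw [hm] at this
    simp only [Pi.smul_apply, smul_eq_mul]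
    linarith
  · intro h
    refine ⟨?_, ?_, rfl, ?_⟩
    · rw [col_mul, hAs₁]
    · rw [hcolm, col_mul, col_mul]
      ext i j
      have := congrFun h i
      simp only [Pi.smul_apply, smul_eq_mul] at this
      have hm : (1 - A).mulVec (fun i => m * s₁ i) i = m * t₁ i := by
        have : (fun i => m * s₁ i) = m • s₁ := by funext i; simp
        rw [this, Matrix.mulVec_smul, hAs₁]; simp
      simp only [Matrix.add_apply, Matrix.of_apply, Matrix.zero_apply, hm]
      rw [Matrix.neg_mulVec]
      simp only [Pi.neg_apply]
      linarith
    · rw [col_mul, hCs₂]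
end

section
/- Let A ∈ ℝ^{p×p} and C ∈ ℝ^{q×q} be strictly upper triangular, t₁ ∈ ℝ^p and t₂ ∈ ℝ^q, m ∈ ℝ, s₂ = (I − C)^{−1} t₂, and suppose W₁₂, W'₁₂ ∈ ℝ^{p×q} both satisfy W₁₂ s₂ = m t₁ and W'₁₂ s₂ = m t₁. If W₁₂ ≠ W'₁₂ and s₂ has at least two nonzero entries, then q ≥ 2 and the two concrete models given by [[A, W₁₂],[0, C]] and [[A, W'₁₂],[0, C]] are distinct matrices sharing the same abstraction, i.e., both satisfy (I−W)^{−1}T = SG for the same T, S, G as in the Block Abstraction theorem. -/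
lemma aux_det_unit {n : ℕ} {M : Matrix (Fin n) (Fin n) ℝ}
    (h : ∀ i j : Fin n, j ≤ i → M i j = 0) : IsUnit (1 - M).det := by
  have ht : (1 - M).BlockTriangular id := by
    intro i j hij
    simp only [Matrix.sub_apply, Matrix.one_apply, h i j (le_of_lt hij)]
    rw [if_neg (by exact fun he => absurd he (by exact Ne.symm (ne_of_lt hij)))]
    ring
  rw [Matrix.det_of_upperTriangular ht]
  have : ∀ i : Fin n, (1 - M) i i = 1 := by
    intro i; simp [Matrix.sub_apply, h i i le_rfl]
  simp [this]

lemma aux_mul_col {α β : Type*} [Fintype β] (M : Matrix α β ℝ) (v : β → ℝ) :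
    M * Matrix.of (fun i (_ : Fin 1) => v i) =
      Matrix.of (fun i (_ : Fin 1) => M.mulVec v i) := by
  ext i j
  simp [Matrix.mul_apply, Matrix.mulVec, dotProduct]

lemma aux_abs {p q : ℕ}
    (A : Matrix (Fin p) (Fin p) ℝ) (C : Matrix (Fin q) (Fin q) ℝ)
    (hA : ∀ i j : Fin p, j ≤ i → A i j = 0) (hC : ∀ i j : Fin q, j ≤ i → C i j = 0)
    (t₁ : Fin p → ℝ) (t₂ : Fin q → ℝ) (m : ℝ)
    (s₁ : Fin p → ℝ) (hs₁ : s₁ = (1 - A)⁻¹.mulVec t₁)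
    (s₂ : Fin q → ℝ) (hs₂ : s₂ = (1 - C)⁻¹.mulVec t₂)
    (W : Matrix (Fin p) (Fin q) ℝ) (hW : W.mulVec s₂ = m • t₁) :
    ((1 - Matrix.fromBlocks A W 0 C)⁻¹ *
        Matrix.fromBlocks (Matrix.of fun i (_ : Fin 1) => t₁ i) 0 0
          (Matrix.of fun i (_ : Fin 1) => t₂ i) =
      Matrix.fromBlocks (Matrix.of fun i (_ : Fin 1) => s₁ i) 0 0
          (Matrix.of fun i (_ : Fin 1) => s₂ i) *
        Matrix.fromBlocks 1 (Matrix.of fun (_ : Fin 1) (_ : Fin 1) => m) 0 1) := by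
  have hdA : IsUnit (1 - A).det := aux_det_unit hA
  have hdC : IsUnit (1 - C).det := aux_det_unit hC
  have hblock : (1 : Matrix (Fin p ⊕ Fin q) (Fin p ⊕ Fin q) ℝ) - Matrix.fromBlocks A W 0 C =
      Matrix.fromBlocks (1 - A) (-W) 0 (1 - C) := by
    rw [← Matrix.fromBlocks_one]
    ext i j
    rcases i with i | i <;> rcases j with j | j <;>
      simp [Matrix.sub_apply, Matrix.one_apply, Sum.inl.injEq, Sum.inr.injEq]
  have hdB : IsUnit ((1 : Matrix (Fin p ⊕ Fin q) (Fin p ⊕ Fin q) ℝ)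
      - Matrix.fromBlocks A W 0 C).det := by
    rw [hblock, Matrix.det_fromBlocks_zero₂₁]
    exact hdA.mul hdC
  have hAs₁ : (1 - A).mulVec s₁ = t₁ := by
    rw [hs₁, Matrix.mulVec_mulVec, Matrix.mul_nonsing_inv _ hdA, Matrix.one_mulVec]
  have hCs₂ : (1 - C).mulVec s₂ = t₂ := by
    rw [hs₂, Matrix.mulVec_mulVec, Matrix.mul_nonsing_inv _ hdC, Matrix.one_mulVec]
  have hT1 : (1 - A) * Matrix.of (fun i (_ : Fin 1) => s₁ i) =
      Matrix.of (fun i (_ : Fin 1) => t₁ i) := by rw [aux_mul_col, hAs₁]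
  have hT2 : (1 - C) * Matrix.of (fun i (_ : Fin 1) => s₂ i) =
      Matrix.of (fun i (_ : Fin 1) => t₂ i) := by rw [aux_mul_col, hCs₂]
  have hWS : W * Matrix.of (fun i (_ : Fin 1) => s₂ i) =
      Matrix.of (fun i (_ : Fin 1) => m * t₁ i) := by
    rw [aux_mul_col, hW]; ext i j; simp
  have hmul : ((1 : Matrix (Fin p ⊕ Fin q) (Fin p ⊕ Fin q) ℝ) - Matrix.fromBlocks A W 0 C) *
      ((Matrix.fromBlocks (Matrix.of fun i (_ : Fin 1) => s₁ i) 0 0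
          (Matrix.of fun i (_ : Fin 1) => s₂ i) : Matrix (Fin p ⊕ Fin q) (Fin 1 ⊕ Fin 1) ℝ) *
        (Matrix.fromBlocks 1 (Matrix.of fun (_ : Fin 1) (_ : Fin 1) => m) 0 1 : Matrix (Fin 1 ⊕ Fin 1) (Fin 1 ⊕ Fin 1) ℝ)) =
      Matrix.fromBlocks (Matrix.of fun i (_ : Fin 1) => t₁ i) 0 0
        (Matrix.of fun i (_ : Fin 1) => t₂ i) := by
    rw [hblock, Matrix.fromBlocks_multiply, Matrix.fromBlocks_multiply]
    have hz : (Matrix.of fun i (_ : Fin 1) => t₁ i) *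
          (Matrix.of fun (_ : Fin 1) (_ : Fin 1) => m) +
        -(Matrix.of fun i (_ : Fin 1) => m * t₁ i) = 0 := by
      ext i j
      simp [Matrix.mul_apply, mul_comm]
    simp only [Matrix.mul_zero, Matrix.zero_mul, Matrix.mul_one, Matrix.one_mul,
      add_zero, zero_add, hWS, hT1, hT2, ← Matrix.mul_assoc]
    rw [Matrix.neg_mul, hWS, hz]
  have := congrArg (fun X => ((1 : Matrix (Fin p ⊕ Fin q) (Fin p ⊕ Fin q) ℝ)
      - Matrix.fromBlocks A W 0 C)⁻¹ * X) hmul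
  have h3 := this.symm
  simp [← Matrix.mul_assoc, Matrix.nonsing_inv_mul _ hdB] at h3
  exact h3

/-- Non-uniqueness of T-concretizations: two distinct inter-block weight matrices
satisfying the block constraint give distinct concrete models with the same
abstraction. -/
theorem concretization_nonunique {p q : ℕ}
    (A : Matrix (Fin p) (Fin p) ℝ) (C : Matrix (Fin q) (Fin q) ℝ)
    (hA : ∀ i j : Fin p, j ≤ i → A i j = 0) (hC : ∀ i j : Fin q, j ≤ i → C i j = 0)
    (t₁ : Fin p → ℝ) (t₂ : Fin q → ℝ) (m : ℝ)
    (s₁ : Fin p → ℝ) (hs₁ : s₁ = (1 - A)⁻¹.mulVec t₁)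
    (s₂ : Fin q → ℝ) (hs₂ : s₂ = (1 - C)⁻¹.mulVec t₂)
    (W₁₂ W₁₂' : Matrix (Fin p) (Fin q) ℝ)
    (hW : W₁₂.mulVec s₂ = m • t₁) (hW' : W₁₂'.mulVec s₂ = m • t₁)
    (hne : W₁₂ ≠ W₁₂')
    (htwo : ∃ k l : Fin q, k ≠ l ∧ s₂ k ≠ 0 ∧ s₂ l ≠ 0) :
    2 ≤ q ∧
    Matrix.fromBlocks A W₁₂ 0 C ≠ Matrix.fromBlocks A W₁₂' 0 C ∧
    ((1 - Matrix.fromBlocks A W₁₂ 0 C)⁻¹ *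
        Matrix.fromBlocks (Matrix.of fun i (_ : Fin 1) => t₁ i) 0 0
          (Matrix.of fun i (_ : Fin 1) => t₂ i) =
      Matrix.fromBlocks (Matrix.of fun i (_ : Fin 1) => s₁ i) 0 0
          (Matrix.of fun i (_ : Fin 1) => s₂ i) *
        Matrix.fromBlocks 1 (Matrix.of fun (_ : Fin 1) (_ : Fin 1) => m) 0 1) ∧
    ((1 - Matrix.fromBlocks A W₁₂' 0 C)⁻¹ *
        Matrix.fromBlocks (Matrix.of fun i (_ : Fin 1) => t₁ i) 0 0
          (Matrix.of fun i (_ : Fin 1) => t₂ i) =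
      Matrix.fromBlocks (Matrix.of fun i (_ : Fin 1) => s₁ i) 0 0
          (Matrix.of fun i (_ : Fin 1) => s₂ i) *
        Matrix.fromBlocks 1 (Matrix.of fun (_ : Fin 1) (_ : Fin 1) => m) 0 1) := by
  refine ⟨?_, ?_, ?_, ?_⟩
  · obtain ⟨k, l, hkl, -, -⟩ := htwo
    have : 1 < Fintype.card (Fin q) := Fintype.one_lt_card_iff.mpr ⟨k, l, hkl⟩
    exact (by simpa using this : 1 < q)
  · intro h
    apply hne
    have := congrArg Matrix.toBlocks₁₂ h
    simpa [Matrix.toBlocks_fromBlocks₁₂] using this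
  · exact aux_abs A C hA hC t₁ t₂ m s₁ hs₁ s₂ hs₂ W₁₂ hW
  · exact aux_abs A C hA hC t₁ t₂ m s₁ hs₁ s₂ hs₂ W₁₂' hW'
end
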